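/- For all integers i ≥ 1, the closed-form stationary distribution of the joint (source state, Version Innovation Age) chain under the randomized stationary policy satisfies the interior balance equations Φ(p)·π₀(i) = q·(1−a)·π₁(i−1) and Φ(q)·π₁(i) = p·(1−a)·π₀(i−1). -/

import Mathlib

/-- Interior balance equations for the stationary distribution of the joint
(source state, Version Innovation Age) chain under the randomized stationary policy. -/
theorem via_interior_balance (p q a : ℝ)
    (hp : 0 < p) (hp1 : p < 1) (hq : 0 < q) (hq1 : q < 1)
    (ha : 0 < a) (ha1 : a ≤ 1)
    (Φ : ℝ → ℝ) (hΦ : ∀ x, Φ x = x + (1 - x) * a)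
    (k w : ℕ → ℕ)
    (hk : ∀ i, k i = if Even i then i / 2 else (i + 1) / 2)
    (hw : ∀ i, w i = if Even i then (i + 2) / 2 else (i + 1) / 2)
    (π₀ π₁ : ℕ → ℝ)
    (hπ₀ : ∀ i, π₀ i = p ^ k i * q ^ w i * a * (1 - a) ^ i /
      ((p + q) * Φ p ^ w i * Φ q ^ k i))
    (hπ₁ : ∀ i, π₁ i = p ^ w i * q ^ k i * a * (1 - a) ^ i /
      ((p + q) * Φ p ^ k i * Φ q ^ w i)) :
    ∀ i : ℕ, 1 ≤ i →
      Φ p * π₀ i = q * (1 - a) * π₁ (i - 1) ∧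
      Φ q * π₁ i = p * (1 - a) * π₀ (i - 1) := by
  have hΦp : 0 < Φ p := by rw [hΦ]; nlinarith
  have hΦq : 0 < Φ q := by rw [hΦ]; nlinarith
  have hpq : 0 < p + q := by linarith
  intro i hi
  rcases Nat.even_or_odd i with he | ho
  · -- i even, i ≥ 2 : i = 2m + 2
    obtain ⟨n, rfl⟩ := he
    obtain ⟨m, rfl⟩ : ∃ m, n = m + 1 := ⟨n - 1, by omega⟩
    have ek : k ((m+1)+(m+1)) = m + 1 := by rw [hk]; rw [if_pos ⟨m+1, rfl⟩]; omega
    have ew : w ((m+1)+(m+1)) = m + 2 := by rw [hw]; rw [if_pos ⟨m+1, rfl⟩]; omega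
    have hodd : ¬ Even ((m+1)+(m+1) - 1) := by rintro ⟨t, ht⟩; omega
    have ek' : k ((m+1)+(m+1) - 1) = m + 1 := by rw [hk, if_neg hodd]; omega
    have ew' : w ((m+1)+(m+1) - 1) = m + 1 := by rw [hw, if_neg hodd]; omega
    have hexp : (m+1)+(m+1) = ((m+1)+(m+1) - 1) + 1 := by omega
    constructor
    · rw [hπ₀, hπ₁, ek, ew, ek', ew', hexp, pow_succ, Nat.add_sub_cancel]
      field_simp
      ring
    · rw [hπ₁, hπ₀, ek, ew, ek', ew', hexp, pow_succ, Nat.add_sub_cancel]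
      field_simp
      ring
  · -- i odd : i = 2n + 1
    obtain ⟨n, rfl⟩ := ho
    have ek : k (2*n+1) = n + 1 := by
      rw [hk, if_neg (by rintro ⟨t, ht⟩; omega)]; omega
    have ew : w (2*n+1) = n + 1 := by
      rw [hw, if_neg (by rintro ⟨t, ht⟩; omega)]; omega
    have hs : 2*n+1 - 1 = 2*n := by omega
    have heven : Even (2*n) := ⟨n, by ring⟩
    have ek' : k (2*n) = n := by rw [hk, if_pos heven]; omega
    have ew' : w (2*n) = n + 1 := by rw [hw, if_pos heven]; omega
    constructor
    · rw [hπ₀, hπ₁, ek, ew, hs, ek', ew', pow_succ (1-a) (2*n)]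
      field_simp
      ring
    · rw [hπ₁, hπ₀, ek, ew, hs, ek', ew', pow_succ (1-a) (2*n)]
      field_simp
      ring
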